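/- Let G be a group and define the maps S, T : G × G → G × G by S(g,x) = (x⁻¹, g^x) and T(g,x) = (g, g⁻¹x). Then for all g, x ∈ G: (i) (S∘S)(g,x) = ((g⁻¹)^{gx}, (x⁻¹)^{gx}); (ii) (S∘S∘S∘S)(g,x) = (g^{[g,x]}, x^{[g,x]}); (iii) (S∘T)∘(S∘T)∘(S∘T) = S∘S as maps on G × G (where S∘T means first apply T, then S). In particular S⁴ and (ST)³·S⁻² act by simultaneous conjugation, so S and T induce an action of SL(2,ℤ) on the set of simultaneous-conjugation classes of pairs. -/
import Mathlib

/-- The map `S : (g,x) ↦ (x⁻¹, g^x)` on `G × G`, where `g^x = x⁻¹gx`. -/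
def SmapST (G : Type*) [Group G] : G × G → G × G :=
  fun p => (p.2⁻¹, p.2⁻¹ * p.1 * p.2)

/-- The map `T : (g,x) ↦ (g, g⁻¹x)` on `G × G`. -/
def TmapST (G : Type*) [Group G] : G × G → G × G :=
  fun p => (p.1, p.1⁻¹ * p.2)

/-- (i) `S² (g,x) = ((g⁻¹)^{gx}, (x⁻¹)^{gx})`;
(ii) `S⁴ (g,x) = (g^{[g,x]}, x^{[g,x]})` with `[g,x] = g⁻¹x⁻¹gx`;
(iii) `(S∘T)³ = S²` as maps on `G × G` (where `S∘T` means first apply `T`, then `S`). -/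
theorem SL2Z_relations_on_pairs (G : Type*) [Group G] (g x : G) :
    (SmapST G ∘ SmapST G) (g, x) =
      ((g * x)⁻¹ * g⁻¹ * (g * x), (g * x)⁻¹ * x⁻¹ * (g * x)) ∧
    (SmapST G ∘ SmapST G ∘ SmapST G ∘ SmapST G) (g, x) =
      ((g⁻¹ * x⁻¹ * g * x)⁻¹ * g * (g⁻¹ * x⁻¹ * g * x),
       (g⁻¹ * x⁻¹ * g * x)⁻¹ * x * (g⁻¹ * x⁻¹ * g * x)) ∧
    (SmapST G ∘ TmapST G) ∘ (SmapST G ∘ TmapST G) ∘ (SmapST G ∘ TmapST G) =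
      SmapST G ∘ SmapST G := by
  refine ⟨?_, ?_, ?_⟩
  · simp only [SmapST, Function.comp, Prod.ext_iff]; constructor <;> group
  · simp only [SmapST, Function.comp, Prod.ext_iff]; constructor <;> group
  · funext p
    simp only [SmapST, TmapST, Function.comp, Prod.ext_iff]
    constructor <;> group
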